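/- Let α = φ - 1 = (√5 - 1)/2 and let A > √5 be a real number. Then there exist only finitely many pairs of integers (n, m) with m > 0 satisfying |n/m - α| < 1/(A m²). -/

import Mathlib

lemma golden_key_int (n m : ℤ) (hm : 0 < m) : n^2 + n*m - m^2 ≠ 0 := by
  intro h
  have h2 : ((2*n + m : ℤ) : ℝ)^2 = 5 * ((m : ℤ) : ℝ)^2 := by
    have : ((2*n+m)^2 : ℤ) = 5 * m^2 := by linear_combination 4 * h
    exact_mod_cast congrArg (fun z : ℤ => (z : ℝ)) this
  have hirr : Irrational (Real.sqrt 5) := by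
    have : Nat.Prime 5 := by norm_num
    exact_mod_cast this.irrational_sqrt
  have hmR : (0:ℝ) < (m:ℝ) := by exact_mod_cast hm
  have hsq : Real.sqrt 5 * (m:ℝ) = ((|2*n + m| : ℤ) : ℝ) := by
    have h1 : (Real.sqrt 5 * (m:ℝ))^2 = ((|2*n + m| : ℤ) : ℝ)^2 := by
      rw [Int.cast_abs, sq_abs, mul_pow, Real.sq_sqrt (by norm_num : (5:ℝ) ≥ 0)]
      linarith [h2]
    have h3 : 0 ≤ Real.sqrt 5 * (m:ℝ) := by positivity
    have h4 : (0:ℝ) ≤ ((|2*n + m| : ℤ) : ℝ) := by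
      rw [Int.cast_abs]; exact abs_nonneg _
    nlinarith
  have hq : Real.sqrt 5 = (((|2*n+m| : ℤ) : ℚ) / ((m:ℤ):ℚ) : ℚ) := by
    push_cast
    rw [eq_div_iff hmR.ne']
    push_cast at hsq
    linarith [hsq]
  exact (Rat.not_irrational _) (hq ▸ hirr)

theorem golden_ratio_approximation_finite (A : ℝ) (hA : Real.sqrt 5 < A) :
    {p : ℤ × ℤ | 0 < p.2 ∧
      |(p.1 : ℝ) / (p.2 : ℝ) - (Real.sqrt 5 - 1) / 2| <
        1 / (A * (p.2 : ℝ) ^ 2)}.Finite := by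
  obtain ⟨a, ha_def⟩ : ∃ a : ℝ, a = (Real.sqrt 5 - 1) / 2 := ⟨_, rfl⟩
  have h5 : Real.sqrt 5 ^ 2 = 5 := Real.sq_sqrt (by norm_num)
  have hs0 : (0:ℝ) < Real.sqrt 5 := Real.sqrt_pos.mpr (by norm_num)
  have hs2 : (2:ℝ) < Real.sqrt 5 := by nlinarith
  have hs3 : Real.sqrt 5 < 3 := by nlinarith
  have hA0 : (0:ℝ) < A := lt_trans hs0 hA
  have hA5 : (0:ℝ) < A - Real.sqrt 5 := by linarith
  have ha2 : a^2 + a = 1 := by rw [ha_def]; nlinarith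
  have hs5a : 2*a + 1 = Real.sqrt 5 := by rw [ha_def]; ring
  have ha1 : a < 1 := by rw [ha_def]; linarith
  have ha0 : 0 < a := by rw [ha_def]; linarith
  obtain ⟨M, hM⟩ := exists_int_gt (1/(A*(A - Real.sqrt 5)))
  apply Set.Finite.subset (Set.finite_Icc (-(2*M), 1) (2*M, M))
  rintro ⟨n, m⟩ ⟨hm, hlt⟩
  simp only [Set.mem_setOf_eq] at hm hlt ⊢
  rw [← ha_def] at hlt
  have hmR : (0:ℝ) < (m:ℝ) := by exact_mod_cast hm
  have hm1 : (1:ℝ) ≤ (m:ℝ) := by exact_mod_cast hm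
  obtain ⟨e, he_def⟩ : ∃ e : ℝ, e = |(n:ℝ) - a*(m:ℝ)| := ⟨_, rfl⟩
  obtain ⟨f, hf_def⟩ : ∃ f : ℝ, f = |(n:ℝ) + (a+1)*(m:ℝ)| := ⟨_, rfl⟩
  have hKint : (1:ℝ) ≤ |((n:ℝ))^2 + (n:ℝ)*(m:ℝ) - (m:ℝ)^2| := by
    have hne := golden_key_int n m hm
    have h1 : (1:ℤ) ≤ |n^2 + n*m - m^2| := Int.one_le_abs hne
    have h2 : ((1:ℤ):ℝ) ≤ ((|n^2 + n*m - m^2| : ℤ) : ℝ) := by exact_mod_cast h1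
    rw [Int.cast_abs] at h2
    push_cast at h2 ⊢
    convert h2 using 2
  have hef : e * f = |((n:ℝ))^2 + (n:ℝ)*(m:ℝ) - (m:ℝ)^2| := by
    rw [he_def, hf_def, ← abs_mul]
    congr 1
    linear_combination (-(m:ℝ)^2) * ha2
  have hmul : |(n:ℝ)/(m:ℝ) - a| * (A * (m:ℝ)^2) < 1 := by
    rw [lt_div_iff₀ (by positivity)] at hlt
    exact hlt
  have hrw : |(n:ℝ)/(m:ℝ) - a| * (m:ℝ) = e := by
    rw [he_def, show (n:ℝ)/(m:ℝ) - a = ((n:ℝ) - a*(m:ℝ))/(m:ℝ) by field_simp,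
      abs_div, abs_of_pos hmR, div_mul_cancel₀ _ hmR.ne']
  have he_lt : e * (A * (m:ℝ)) < 1 := by
    calc e * (A * (m:ℝ)) = |(n:ℝ)/(m:ℝ) - a| * (A * (m:ℝ)^2) := by
          rw [← hrw]; ring
      _ < 1 := hmul
  have hef1 : 1 ≤ e * f := by rw [hef]; exact hKint
  have hf0 : 0 ≤ f := hf_def ▸ abs_nonneg _
  have he0 : 0 < e := by
    by_contra h
    push_neg at h
    have he' : e = 0 := le_antisymm h (he_def ▸ abs_nonneg _)
    rw [he'] at hef1
    linarith
  have hfA : A * (m:ℝ) < f := by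
    by_contra hcon
    push_neg at hcon
    linarith [mul_le_mul_of_nonneg_left hcon he0.le]
  have hftri : f ≤ e + Real.sqrt 5 * (m:ℝ) := by
    have hrw2 : (n:ℝ) + (a+1)*(m:ℝ) = ((n:ℝ) - a*(m:ℝ)) + (2*a+1)*(m:ℝ) := by ring
    rw [hf_def, hrw2, hs5a]
    calc |((n:ℝ) - a*(m:ℝ)) + Real.sqrt 5 * (m:ℝ)|
        ≤ |(n:ℝ) - a*(m:ℝ)| + |Real.sqrt 5 * (m:ℝ)| := abs_add_le _ _
      _ = e + Real.sqrt 5 * (m:ℝ) := by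
          rw [abs_of_pos (by positivity : (0:ℝ) < Real.sqrt 5 * (m:ℝ)), ← he_def]
  have hstep : (A - Real.sqrt 5) * (m:ℝ) < e := by linarith
  have hprod := mul_lt_mul_of_pos_right hstep (show (0:ℝ) < A * (m:ℝ) by positivity)
  have hm2 : (m:ℝ)^2 * (A * (A - Real.sqrt 5)) < 1 := by
    have hq : (m:ℝ)^2 * (A * (A - Real.sqrt 5)) = ((A - Real.sqrt 5) * (m:ℝ)) * (A * (m:ℝ)) := by ring
    rw [hq]; linarith
  have hm2' : (m:ℝ)^2 < 1/(A*(A - Real.sqrt 5)) := by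
    rw [lt_div_iff₀ (by positivity)]; linarith
  have hmsq : (m:ℝ) ≤ (m:ℝ)^2 := by
    rw [pow_two]; linarith [mul_le_mul_of_nonneg_left hm1 hmR.le]
  have hmM : (m:ℝ) < (M:ℝ) := by linarith
  have hmMz : m ≤ M := by exact_mod_cast hmM.le
  have hAm1 : (1:ℝ) < A * (m:ℝ) := by linarith [mul_le_mul_of_nonneg_left hm1 hA0.le]
  have heA : e < 1 := by linarith [mul_lt_mul_of_pos_left hAm1 he0]
  have hn : |(n:ℝ)| < 2*(m:ℝ) := by
    have : |(n:ℝ)| = |((n:ℝ) - a*(m:ℝ)) + a*(m:ℝ)| := by ring_nf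
    rw [this]
    calc |((n:ℝ) - a*(m:ℝ)) + a*(m:ℝ)| ≤ e + |a*(m:ℝ)| := by
          rw [he_def]; exact abs_add_le _ _
      _ = e + a*(m:ℝ) := by rw [abs_of_pos (by positivity)]
      _ < 1 + (m:ℝ) := by linarith [mul_lt_mul_of_pos_right ha1 hmR]
      _ ≤ 2*(m:ℝ) := by linarith
  have hn2M : |(n:ℝ)| < 2*(M:ℝ) := by linarith
  have hnle : n ≤ 2*M := by
    have h1 : (n:ℝ) ≤ |(n:ℝ)| := le_abs_self _
    have h' : (n:ℝ) < ((2*M : ℤ) : ℝ) := by push_cast; linarith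
    exact_mod_cast h'.le
  have hnge : -(2*M) ≤ n := by
    have h1 : -|(n:ℝ)| ≤ (n:ℝ) := neg_abs_le _
    have h' : ((-(2*M) : ℤ) : ℝ) < (n:ℝ) := by push_cast; linarith
    exact_mod_cast h'.le
  exact Set.mem_Icc.mpr ⟨⟨hnge, hm⟩, ⟨hnle, hmMz⟩⟩
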